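/- Let α be a type and let A and B be subgroups of the free group FreeGroup α such that every element of A commutes with every element of B. If A ≠ ⊥ and B ≠ ⊥, then the subgroup A ⊔ B generated by A and B is cyclic: there exists g ∈ FreeGroup α with A ⊔ B ≤ Subgroup.zpowers g. (Equivalently, as used in the proofs of Lemma 3.1 and Claim 3.2 of the paper: if two elementwise-commuting subgroups of a free group generate a non-cyclic subgroup, then one of them is trivial.) -/

import Mathlib

open Subgroup

/-- Distinct free generators do not commute. -/
lemma myaux_of_eq_of_comm {β : Type*} (x y : β)
    (h : FreeGroup.of x * FreeGroup.of y = FreeGroup.of y * FreeGroup.of x) : x = y := by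
  classical
  by_contra hxy
  let f : β → Equiv.Perm (Fin 3) :=
    fun s => if s = x then Equiv.swap 0 1 else if s = y then Equiv.swap 1 2 else 1
  have hfx : FreeGroup.lift f (FreeGroup.of x) = Equiv.swap 0 1 := by simp [f]
  have hfy : FreeGroup.lift f (FreeGroup.of y) = Equiv.swap 1 2 := by
    simp [f, Ne.symm hxy]
  have h2 := congrArg (FreeGroup.lift f) h
  rw [map_mul, map_mul, hfx, hfy] at h2
  exact absurd h2 (by decide)

/-- An abelian free group is cyclic. -/
lemma myaux_freeGroup_cyclic {β : Type*}
    (hc : ∀ a b : FreeGroup β, a * b = b * a) :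
    ∃ g : FreeGroup β, ∀ h : FreeGroup β, h ∈ Subgroup.zpowers g := by
  classical
  by_cases hne : Nonempty β
  · obtain ⟨x0⟩ := hne
    refine ⟨FreeGroup.of x0, fun h => ?_⟩
    have hrange : Set.range (FreeGroup.of : β → FreeGroup β) = {FreeGroup.of x0} := by
      ext w
      simp only [Set.mem_range, Set.mem_singleton_iff]
      constructor
      · rintro ⟨s, rfl⟩
        rw [myaux_of_eq_of_comm s x0 (hc _ _)]
      · rintro rfl; exact ⟨x0, rfl⟩
    have htop := FreeGroup.closure_range_of β
    rw [hrange, ← Subgroup.zpowers_eq_closure] at htop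
    rw [htop]; trivial
  · refine ⟨1, fun h => ?_⟩
    have : h = 1 := by
      have : h.toWord = [] := List.eq_nil_iff_forall_not_mem.mpr
        (fun (p : β × Bool) hp => (hne ⟨p.1⟩).elim)
      rwa [FreeGroup.toWord_eq_nil_iff] at this
    simp [this]

/-- An abelian group which is free is cyclic. -/
lemma myaux_isFreeGroup_cyclic {G : Type u} [Group G] [IsFreeGroup G]
    (hc : ∀ a b : G, a * b = b * a) :
    ∃ g : G, ∀ h : G, h ∈ Subgroup.zpowers g := by
  let e : G ≃* FreeGroup (IsFreeGroup.Generators G) := IsFreeGroup.toFreeGroup G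
  have hc' : ∀ a b : FreeGroup (IsFreeGroup.Generators G), a * b = b * a := by
    intro a b
    have := congrArg e (hc (e.symm a) (e.symm b))
    simpa [map_mul] using this
  obtain ⟨g, hg⟩ := myaux_freeGroup_cyclic hc'
  refine ⟨e.symm g, fun h => ?_⟩
  obtain ⟨n, hn⟩ := hg (e h)
  have hn' : g ^ n = e h := hn
  exact ⟨n, show e.symm g ^ n = h by rw [← map_zpow, hn', MulEquiv.symm_apply_apply]⟩

/-- Commuting elements of a free group lie in a common cyclic subgroup. -/
lemma myaux_commute_zpowers {G : Type u} [Group G] [IsFreeGroup G] {x y : G}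
    (h : x * y = y * x) :
    ∃ z : G, x ∈ Subgroup.zpowers z ∧ y ∈ Subgroup.zpowers z := by
  set H := Subgroup.closure ({x, y} : Set G) with hH
  have hcomm : ∀ a ∈ H, ∀ b ∈ H, a * b = b * a := by
    intro a ha b hb
    refine Subgroup.closure_induction₂ (p := fun a b _ _ => a * b = b * a)
      ?_ ?_ ?_ ?_ ?_ ?_ ?_ ha hb
    · rintro a b (rfl | rfl) (rfl | rfl)
      · rfl
      · exact h
      · exact h.symm
      · rfl
    · intro a _
      show 1 * a = a * 1
      rw [one_mul, mul_one]
    · intro a _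
      show a * 1 = 1 * a
      rw [one_mul, mul_one]
    · intro a b c _ _ _ q1 q2
      have q1' : a * c = c * a := q1
      have q2' : b * c = c * b := q2
      show a * b * c = c * (a * b)
      rw [mul_assoc, q2', ← mul_assoc, q1', mul_assoc]
    · intro a b c _ _ _ q1 q2
      have q1' : c * a = a * c := q1
      have q2' : c * b = b * c := q2
      show c * (a * b) = a * b * c
      rw [← mul_assoc, q1', mul_assoc, q2', ← mul_assoc]
    · intro a b _ _ q1
      have q1' : a * b = b * a := q1
      exact (Commute.inv_left q1' : _)
    · intro a b _ _ q1
      have q1' : a * b = b * a := q1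
      exact (Commute.inv_right q1' : _)
  have hcomm' : ∀ a b : H, a * b = b * a := by
    rintro ⟨a, ha⟩ ⟨b, hb⟩
    exact Subtype.ext (hcomm a ha b hb)
  obtain ⟨g, hg⟩ := myaux_isFreeGroup_cyclic hcomm'
  have hx : x ∈ H := Subgroup.subset_closure (by simp)
  have hy : y ∈ H := Subgroup.subset_closure (by simp)
  refine ⟨(g : G), ?_, ?_⟩
  · obtain ⟨n, hn⟩ := hg ⟨x, hx⟩
    have hn' : g ^ n = ⟨x, hx⟩ := hn
    exact ⟨n, show (g : G) ^ n = x by rw [← SubgroupClass.coe_zpow, hn']⟩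
  · obtain ⟨n, hn⟩ := hg ⟨y, hy⟩
    have hn' : g ^ n = ⟨y, hy⟩ := hn
    exact ⟨n, show (g : G) ^ n = y by rw [← SubgroupClass.coe_zpow, hn']⟩

/-- A generator detection: if `of x` is a power of `u`, then powers of `u` are powers
of `of x`. -/
lemma myaux_gen_power {G : Type u} [Group G] [IsFreeGroup G]
    (x : IsFreeGroup.Generators G) {u : G} {k : ℤ} (hk : u ^ k = IsFreeGroup.of x) :
    Subgroup.zpowers u ≤ Subgroup.zpowers (IsFreeGroup.of x) := by
  classical
  let φ : G →* Multiplicative ℤ :=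
    IsFreeGroup.lift (fun s => if s = x then Multiplicative.ofAdd (1 : ℤ) else 1)
  have hφx : φ (IsFreeGroup.of x) = Multiplicative.ofAdd 1 := by
    simp [φ, IsFreeGroup.lift_of]
  have hdeg : k * (φ u).toAdd = 1 := by
    have := congrArg (fun g => (φ g).toAdd) hk
    simpa [map_zpow, hφx, toAdd_zpow, mul_comm] using this
  have hk1 : k = 1 ∨ k = -1 := by
    rcases Int.isUnit_iff.mp (IsUnit.of_mul_eq_one (a := k) _ hdeg) with h | h
    · exact Or.inl h
    · exact Or.inr h
  rcases hk1 with rfl | rfl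
  · rw [zpow_one] at hk
    rw [hk]
  · rw [zpow_neg_one] at hk
    have : u = (IsFreeGroup.of x)⁻¹ := by rw [← hk, inv_inv]
    rw [this]
    intro w hw
    obtain ⟨n, hn⟩ := hw
    exact ⟨-n, by simpa using hn⟩

/-- A free group with a nontrivial central element is abelian. -/
lemma myaux_center {G : Type u} [Group G] [IsFreeGroup G] {z : G} (hz : z ≠ 1)
    (hc : ∀ g : G, z * g = g * z) : ∀ a b : G, a * b = b * a := by
  classical
  have key : ∀ x : IsFreeGroup.Generators G, z ∈ Subgroup.zpowers (IsFreeGroup.of x) := by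
    intro x
    obtain ⟨u, hzu, hxu⟩ := myaux_commute_zpowers (hc (IsFreeGroup.of x))
    obtain ⟨k, hk⟩ := hxu
    exact myaux_gen_power x hk hzu
  have hsub : ∀ x y : IsFreeGroup.Generators G, x = y := by
    intro x y
    by_contra hxy
    obtain ⟨m, hm⟩ := key x
    obtain ⟨n, hn⟩ := key y
    have hm' : IsFreeGroup.of x ^ m = z := hm
    have hn' : IsFreeGroup.of y ^ n = z := hn
    let φ : G →* Multiplicative ℤ :=
      IsFreeGroup.lift (fun s => if s = x then Multiplicative.ofAdd (1 : ℤ) else 1)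
    have h1 : (φ z).toAdd = m := by
      rw [← hm']; simp [φ, map_zpow, IsFreeGroup.lift_of]
    have h2 : (φ z).toAdd = 0 := by
      rw [← hn']; simp [φ, map_zpow, IsFreeGroup.lift_of, Ne.symm hxy]
    have hm0 : m = 0 := by rw [← h1, h2]
    rw [hm0, zpow_zero] at hm'
    exact hz hm'.symm
  -- generators are all equal, so the group is cyclic hence abelian
  have hc2 : ∀ a b : FreeGroup (IsFreeGroup.Generators G), a * b = b * a := by
    have : Subsingleton (IsFreeGroup.Generators G) := ⟨hsub⟩
    by_cases hne : Nonempty (IsFreeGroup.Generators G)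
    · obtain ⟨x0⟩ := hne
      intro a b
      have hrange : Set.range (FreeGroup.of : IsFreeGroup.Generators G →
          FreeGroup (IsFreeGroup.Generators G)) = {FreeGroup.of x0} := by
        ext w
        simp only [Set.mem_range, Set.mem_singleton_iff]
        constructor
        · rintro ⟨s, rfl⟩; rw [hsub s x0]
        · rintro rfl; exact ⟨x0, rfl⟩
      have htop := FreeGroup.closure_range_of (IsFreeGroup.Generators G)
      rw [hrange, ← Subgroup.zpowers_eq_closure] at htop
      have ha : a ∈ Subgroup.zpowers (FreeGroup.of x0) := htop ▸ Subgroup.mem_top a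
      have hb : b ∈ Subgroup.zpowers (FreeGroup.of x0) := htop ▸ Subgroup.mem_top b
      obtain ⟨p, rfl⟩ := ha
      obtain ⟨q, rfl⟩ := hb
      exact zpow_mul_comm _ p q
    · classical
      intro a b
      have h1 : a = 1 := by
        have : a.toWord = [] := List.eq_nil_iff_forall_not_mem.mpr
          (fun (p : (IsFreeGroup.Generators G) × Bool) hp => (hne ⟨p.1⟩).elim)
        rwa [FreeGroup.toWord_eq_nil_iff] at this
      rw [h1, one_mul, mul_one]
  intro a b
  let e : G ≃* FreeGroup (IsFreeGroup.Generators G) := IsFreeGroup.toFreeGroup G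
  have := congrArg e.symm (hc2 (e a) (e b))
  simpa [map_mul] using this

/-- Commutation transitivity in a free group. -/
lemma myaux_comm_trans {G : Type u} [Group G] [IsFreeGroup G] {c d e : G} (he : e ≠ 1)
    (h1 : e * c = c * e) (h2 : e * d = d * e) : c * d = d * c := by
  set K := Subgroup.closure ({c, d, e} : Set G) with hK
  have hcK : c ∈ K := Subgroup.subset_closure (by simp)
  have hdK : d ∈ K := Subgroup.subset_closure (by simp)
  have heK : e ∈ K := Subgroup.subset_closure (by simp)
  have hcent : ∀ g ∈ K, e * g = g * e := by
    intro g hg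
    refine Subgroup.closure_induction (p := fun g _ => e * g = g * e) ?_ ?_ ?_ ?_ hg
    · rintro g (rfl | rfl | rfl)
      exacts [h1, h2, rfl]
    · show e * 1 = 1 * e
      rw [one_mul, mul_one]
    · intro a b _ _ ha hb
      have ha' : e * a = a * e := ha
      have hb' : e * b = b * e := hb
      show e * (a * b) = a * b * e
      rw [← mul_assoc, ha', mul_assoc, hb', ← mul_assoc]
    · intro a _ ha
      have ha' : e * a = a * e := ha
      exact (Commute.inv_right ha' : _)
  have hz : (⟨e, heK⟩ : K) ≠ 1 := fun h => he (congrArg Subtype.val h)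
  have hc' : ∀ g : K, (⟨e, heK⟩ : K) * g = g * ⟨e, heK⟩ := by
    rintro ⟨g, hg⟩
    exact Subtype.ext (hcent g hg)
  have := myaux_center hz hc' ⟨c, hcK⟩ ⟨d, hdK⟩
  exact congrArg Subtype.val this

/-- Two nontrivial elementwise-commuting subgroups of a free group generate a cyclic
subgroup. -/
theorem stmt15 (α : Type) (A B : Subgroup (FreeGroup α))
    (hcomm : ∀ a ∈ A, ∀ b ∈ B, a * b = b * a)
    (hA : A ≠ ⊥) (hB : B ≠ ⊥) :
    ∃ g : FreeGroup α, A ⊔ B ≤ Subgroup.zpowers g := by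
  obtain ⟨⟨a0, ha0A⟩, ha0⟩ := Subgroup.ne_bot_iff_exists_ne_one.mp hA
  obtain ⟨⟨b0, hb0B⟩, hb0⟩ := Subgroup.ne_bot_iff_exists_ne_one.mp hB
  have ha0' : a0 ≠ 1 := fun h => ha0 (Subtype.ext h)
  have hb0' : b0 ≠ 1 := fun h => hb0 (Subtype.ext h)
  have hAcomm : ∀ a1 ∈ A, ∀ a2 ∈ A, a1 * a2 = a2 * a1 := by
    intro a1 h1 a2 h2
    exact myaux_comm_trans hb0' (hcomm a1 h1 b0 hb0B).symm (hcomm a2 h2 b0 hb0B).symm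
  have hBcomm : ∀ b1 ∈ B, ∀ b2 ∈ B, b1 * b2 = b2 * b1 := by
    intro b1 h1 b2 h2
    exact myaux_comm_trans ha0' (hcomm a0 ha0A b1 h1) (hcomm a0 ha0A b2 h2)
  have hsup : A ⊔ B = Subgroup.closure ((A : Set (FreeGroup α)) ∪ B) := by
    rw [Subgroup.closure_union, Subgroup.closure_eq, Subgroup.closure_eq]
  have hcommH : ∀ g1 ∈ A ⊔ B, ∀ g2 ∈ A ⊔ B, g1 * g2 = g2 * g1 := by
    rw [hsup]
    intro g1 h1 g2 h2
    refine Subgroup.closure_induction₂ (p := fun a b _ _ => a * b = b * a)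
      ?_ ?_ ?_ ?_ ?_ ?_ ?_ h1 h2
    · rintro a b (ha | ha) (hb | hb)
      · exact hAcomm a ha b hb
      · exact hcomm a ha b hb
      · exact (hcomm b hb a ha).symm
      · exact hBcomm a ha b hb
    · intro a _
      show 1 * a = a * 1
      rw [one_mul, mul_one]
    · intro a _
      show a * 1 = 1 * a
      rw [one_mul, mul_one]
    · intro a b c _ _ _ q1 q2
      have q1' : a * c = c * a := q1
      have q2' : b * c = c * b := q2
      show a * b * c = c * (a * b)
      rw [mul_assoc, q2', ← mul_assoc, q1', mul_assoc]
    · intro a b c _ _ _ q1 q2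
      have q1' : c * a = a * c := q1
      have q2' : c * b = b * c := q2
      show c * (a * b) = a * b * c
      rw [← mul_assoc, q1', mul_assoc, q2', ← mul_assoc]
    · intro a b _ _ q1
      have q1' : a * b = b * a := q1
      exact (Commute.inv_left q1' : _)
    · intro a b _ _ q1
      have q1' : a * b = b * a := q1
      exact (Commute.inv_right q1' : _)
  have hcomm' : ∀ a b : (A ⊔ B : Subgroup (FreeGroup α)), a * b = b * a := by
    rintro ⟨a, ha⟩ ⟨b, hb⟩
    exact Subtype.ext (hcommH a ha b hb)
  obtain ⟨g, hg⟩ := myaux_isFreeGroup_cyclic hcomm'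
  refine ⟨(g : FreeGroup α), fun x hx => ?_⟩
  obtain ⟨n, hn⟩ := hg ⟨x, hx⟩
  have hn' : g ^ n = ⟨x, hx⟩ := hn
  exact ⟨n, show (g : FreeGroup α) ^ n = x by rw [← SubgroupClass.coe_zpow, hn']⟩
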